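/- arXiv:2304.04501 — 3 statements merged into one kernel-verified Lean document; each statement's English description precedes it below -/
import Mathlib

section
/- Let R be an associative unital algebra over ℚ and let A = (a_{ij}) be an n×n Manin matrix with entries in R. For k ≥ 1 set T_k = tr(A^k), and define σ_0, σ_1, …, σ_n ∈ R by the identity cdet(1 + αA) = ∑_{k=0}^{n} σ_k α^k in the polynomial ring R[α] (α a central variable). Then for every k = 1, …, n the Newton identity σ_k = ((−1)^{k+1}/k) · ∑_{i=0}^{k−1} (−1)^i σ_i T_{k−i} holds. -/
/-- The column determinant of a square matrix with possibly noncommuting entries: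
`cdet A = ∑_{σ ∈ S_n} sign(σ) · a_{σ(1)1} a_{σ(2)2} ⋯ a_{σ(n)n}`. -/
noncomputable def cdet {n : ℕ} {R : Type*} [Ring R] (A : Matrix (Fin n) (Fin n) R) : R :=
  ∑ σ : Equiv.Perm (Fin n),
    ((Equiv.Perm.sign σ : ℤ) • ((List.finRange n).map fun i => A (σ i) i).prod)

/-- A square matrix `A` over an associative unital ring is a Manin matrix if
`[a_{ij}, a_{pq}] = [a_{pj}, a_{iq}]` for all indices. -/
def IsManinMatrix {n : ℕ} {R : Type*} [Ring R] (A : Matrix (Fin n) (Fin n) R) : Prop :=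
  ∀ i j p q, A i j * A p q - A p q * A i j = A p j * A i q - A i q * A p j

namespace NewtonAux

section Lists

variable {β : Type*} {n : ℕ}

lemma take_map_eq (a : ℕ) (f g : Fin n → β) (h : ∀ p : Fin n, (p : ℕ) < a → f p = g p) :
    ((List.finRange n).take a).map f = ((List.finRange n).take a).map g := by
  apply List.ext_getElem (by simp)
  intro i h1 h2
  simp only [List.getElem_map, List.getElem_take, List.getElem_finRange]
  apply h
  simp only [List.length_map, List.length_take, List.length_finRange, lt_min_iff] at h1
  simpa using h1.1

lemma drop_map_eq (a : ℕ) (f g : Fin n → β) (h : ∀ p : Fin n, a ≤ (p : ℕ) → f p = g p) :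
    ((List.finRange n).drop a).map f = ((List.finRange n).drop a).map g := by
  apply List.ext_getElem (by simp)
  intro i h1 h2
  simp only [List.getElem_map, List.getElem_drop, List.getElem_finRange]
  apply h
  simp

variable {M' : Type*} [Monoid M']

lemma prod_split_pair (t u : Fin n) (htu : (t : ℕ) + 1 = (u : ℕ)) (f : Fin n → M') :
    ((List.finRange n).map f).prod =
      (((List.finRange n).take (t : ℕ)).map f).prod * f t * f u *
        (((List.finRange n).drop ((t : ℕ) + 2)).map f).prod := by
  have h1 : (t : ℕ) < (List.finRange n).length := by simp [t.isLt]
  have h2 : (t : ℕ) + 1 < (List.finRange n).length := by simp [htu ▸ u.isLt]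
  conv_lhs => rw [← List.take_append_drop (t : ℕ) (List.finRange n)]
  rw [List.drop_eq_getElem_cons h1, List.drop_eq_getElem_cons h2]
  simp only [List.getElem_finRange, List.map_append, List.prod_append, List.map_cons,
    List.prod_cons]
  have e1 : (Fin.cast (by simp) (⟨(t : ℕ), h1⟩ : Fin (List.finRange n).length) : Fin n) = t := by
    ext; simp
  have e2 : (Fin.cast (by simp) (⟨(t : ℕ) + 1, h2⟩ : Fin (List.finRange n).length) : Fin n) = u := by
    ext; simp [htu]
  rw [e1, e2]
  ring_nf
  simp [mul_assoc]

lemma prod_split_last {m : ℕ} (f : Fin (m + 1) → M') :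
    ((List.finRange (m + 1)).map f).prod =
      ((List.finRange m).map fun p : Fin m => f p.castSucc).prod * f (Fin.last m) := by
  rw [List.finRange_succ_last, List.map_append, List.prod_append, List.map_map]
  simp [Function.comp_def]

end Lists

section Rat

variable {S : Type*} [Ring S] [Algebra ℚ S]

lemma eq_of_sub_eq_sub {x y : S} (h : x - y = y - x) : x = y := by
  have h2 : (2 : ℚ) • (x - y) = 0 := by
    rw [two_smul]
    nth_rewrite 2 [h]
    abel
  have h3 : x - y = (2 : ℚ)⁻¹ • ((2 : ℚ) • (x - y)) := by
    rw [inv_smul_smul₀ two_ne_zero]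
  rw [h2, smul_zero] at h3
  exact sub_eq_zero.mp h3

lemma eq_zero_of_self_eq_neg {x : S} (h : x = -x) : x = 0 := by
  have h2 : (2 : ℚ) • x = 0 := by
    rw [two_smul]
    nth_rewrite 2 [h]
    abel
  have h3 : x = (2 : ℚ)⁻¹ • ((2 : ℚ) • x) := by
    rw [inv_smul_smul₀ two_ne_zero]
  rw [h2, smul_zero] at h3
  exact h3

end Rat

section MCols

variable {S : Type*} [Ring S] {n : ℕ}

/-- Pairwise Manin-type relations between all columns of `W`. -/
def MCols (W : Matrix (Fin n) (Fin n) S) : Prop :=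
  ∀ a b t u, W a t * W b u - W b u * W a t = W b t * W a u - W a u * W b t

lemma MCols.submatrix {W : Matrix (Fin n) (Fin n) S} (hW : MCols W) (g : Fin n → Fin n) :
    MCols (W.submatrix id g) := fun a b t u => hW a b (g t) (g u)

lemma cdet_swap_adj (W : Matrix (Fin n) (Fin n) S) (hW : MCols W) (t u : Fin n)
    (htu : (t : ℕ) + 1 = (u : ℕ)) :
    cdet (W.submatrix id (Equiv.swap t u)) = -cdet W := by
  have htne : t ≠ u := by
    intro h; rw [h] at htu; omega
  set s := Equiv.swap t u with hs
  have hsfix : ∀ p : Fin n, p ≠ t → p ≠ u → s p = p := fun p h1 h2 =>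
    Equiv.swap_apply_of_ne_of_ne h1 h2
  -- reindex the sum for cdet (W ∘ s)
  have hre : cdet (W.submatrix id s) =
      ∑ σ : Equiv.Perm (Fin n), ((Equiv.Perm.sign (σ * s) : ℤ) •
        ((List.finRange n).map fun p => W ((σ * s) p) (s p)).prod) := by
    unfold cdet
    exact (Fintype.sum_equiv (Equiv.mulRight s)
      (fun σ => ((Equiv.Perm.sign (σ * s) : ℤ) •
        ((List.finRange n).map fun p => W ((σ * s) p) (s p)).prod))
      (fun σ => ((Equiv.Perm.sign σ : ℤ) •
        ((List.finRange n).map fun p => (W.submatrix id s) (σ p) p).prod))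
      (fun σ => rfl)).symm
  have key : cdet (W.submatrix id s) + cdet W = 0 := by
    rw [hre]
    unfold cdet
    rw [← Finset.sum_add_distrib]
    apply Finset.sum_involution (fun σ _ => σ * s)
    · intro σ _
      -- rearrange each of the four products using prod_split_pair
      have sgn : ((Equiv.Perm.sign (σ * s) : ℤ)) = -(Equiv.Perm.sign σ : ℤ) := by
        rw [Equiv.Perm.sign_mul]
        rw [Equiv.Perm.sign_swap htne]
        simp
      have sgn2 : ((Equiv.Perm.sign (σ * s * s) : ℤ)) = (Equiv.Perm.sign σ : ℤ) := by
        rw [Equiv.Perm.sign_mul, Equiv.Perm.sign_mul, Equiv.Perm.sign_swap htne]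
        simp
      have hst : s t = u := Equiv.swap_apply_left t u
      have hsu : s u = t := Equiv.swap_apply_right t u
      -- the four products
      rw [prod_split_pair t u htu (fun p => W ((σ * s) p) (s p)),
          prod_split_pair t u htu (fun p => W (σ p) p),
          prod_split_pair t u htu (fun p => W ((σ * s * s) p) (s p)),
          prod_split_pair t u htu (fun p => W ((σ * s) p) p)]
      have hPre1 : ((List.finRange n).take (t : ℕ)).map (fun p => W ((σ * s) p) (s p)) =
          ((List.finRange n).take (t : ℕ)).map (fun p => W (σ p) p) := by
        apply take_map_eq
        intro p hp
        have h1 : p ≠ t := by intro h; rw [h] at hp; omega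
        have h2 : p ≠ u := by intro h; rw [h] at hp; omega
        simp [Equiv.Perm.mul_apply, hsfix p h1 h2]
      have hPre2 : ((List.finRange n).take (t : ℕ)).map (fun p => W ((σ * s * s) p) (s p)) =
          ((List.finRange n).take (t : ℕ)).map (fun p => W (σ p) p) := by
        apply take_map_eq
        intro p hp
        have h1 : p ≠ t := by intro h; rw [h] at hp; omega
        have h2 : p ≠ u := by intro h; rw [h] at hp; omega
        simp [Equiv.Perm.mul_apply, hsfix p h1 h2]
      have hPre3 : ((List.finRange n).take (t : ℕ)).map (fun p => W ((σ * s) p) p) =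
          ((List.finRange n).take (t : ℕ)).map (fun p => W (σ p) p) := by
        apply take_map_eq
        intro p hp
        have h1 : p ≠ t := by intro h; rw [h] at hp; omega
        have h2 : p ≠ u := by intro h; rw [h] at hp; omega
        simp [Equiv.Perm.mul_apply, hsfix p h1 h2]
      have hPost1 : ((List.finRange n).drop ((t : ℕ) + 2)).map (fun p => W ((σ * s) p) (s p)) =
          ((List.finRange n).drop ((t : ℕ) + 2)).map (fun p => W (σ p) p) := by
        apply drop_map_eq
        intro p hp
        have h1 : p ≠ t := by intro h; rw [h] at hp; omega
        have h2 : p ≠ u := by intro h; rw [h] at hp; omega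
        simp [Equiv.Perm.mul_apply, hsfix p h1 h2]
      have hPost2 : ((List.finRange n).drop ((t : ℕ) + 2)).map (fun p => W ((σ * s * s) p) (s p)) =
          ((List.finRange n).drop ((t : ℕ) + 2)).map (fun p => W (σ p) p) := by
        apply drop_map_eq
        intro p hp
        have h1 : p ≠ t := by intro h; rw [h] at hp; omega
        have h2 : p ≠ u := by intro h; rw [h] at hp; omega
        simp [Equiv.Perm.mul_apply, hsfix p h1 h2]
      have hPost3 : ((List.finRange n).drop ((t : ℕ) + 2)).map (fun p => W ((σ * s) p) p) =
          ((List.finRange n).drop ((t : ℕ) + 2)).map (fun p => W (σ p) p) := by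
        apply drop_map_eq
        intro p hp
        have h1 : p ≠ t := by intro h; rw [h] at hp; omega
        have h2 : p ≠ u := by intro h; rw [h] at hp; omega
        simp [Equiv.Perm.mul_apply, hsfix p h1 h2]
      rw [hPre1, hPre2, hPre3, hPost1, hPost2, hPost3, sgn, sgn2]
      have ha1 : (σ * s) t = σ u := by simp [Equiv.Perm.mul_apply, hst]
      have ha2 : (σ * s) u = σ t := by simp [Equiv.Perm.mul_apply, hsu]
      have ha3 : (σ * s * s) t = σ t := by simp [Equiv.Perm.mul_apply, hst, hsu]
      have ha4 : (σ * s * s) u = σ u := by simp [Equiv.Perm.mul_apply, hst, hsu]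
      rw [ha1, ha2, ha3, ha4, hst, hsu]
      set A1 := (((List.finRange n).take (t : ℕ)).map (fun p => W (σ p) p)).prod
      set B1 := (((List.finRange n).drop ((t : ℕ) + 2)).map (fun p => W (σ p) p)).prod
      set z := (Equiv.Perm.sign σ : ℤ)
      -- now pure algebra
      have hman := hW (σ t) (σ u) t u
      have expand : ∀ x y : S, A1 * x * y * B1 = A1 * (x * y) * B1 := by
        intro x y; rw [mul_assoc A1]
      calc (-z) • (A1 * W (σ u) u * W (σ t) t * B1) + z • (A1 * W (σ t) t * W (σ u) u * B1) +
            ((z) • (A1 * W (σ t) u * W (σ u) t * B1) + (-z) • (A1 * W (σ u) t * W (σ t) u * B1))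
          = z • (A1 * (W (σ t) t * W (σ u) u - W (σ u) u * W (σ t) t) * B1) -
            z • (A1 * (W (σ u) t * W (σ t) u - W (σ t) u * W (σ u) t) * B1) := by
            simp only [neg_smul, expand, mul_sub, sub_mul, smul_sub]
            abel
        _ = 0 := by rw [hman]; simp
    · intro σ _ _
      intro h
      have : (σ * s) t = σ t := by rw [h]
      simp only [Equiv.Perm.mul_apply, hs, Equiv.swap_apply_left] at this
      exact htne (σ.injective this).symm
    · intro σ _; exact Finset.mem_univ _
    · intro σ _
      rw [mul_assoc, hs]
      simp
  exact eq_neg_of_add_eq_zero_left key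

lemma cdet_swap (W : Matrix (Fin n) (Fin n) S) (hW : MCols W) (t u : Fin n) (hne : t ≠ u) :
    cdet (W.submatrix id (Equiv.swap t u)) = -cdet W := by
  suffices H : ∀ d (W : Matrix (Fin n) (Fin n) S), MCols W → ∀ t u : Fin n,
      (t : ℕ) < (u : ℕ) → (u : ℕ) - (t : ℕ) = d + 1 →
      cdet (W.submatrix id (Equiv.swap t u)) = -cdet W by
    rcases lt_or_gt_of_ne (fun h : (t : ℕ) = (u : ℕ) => hne (Fin.ext h)) with hlt | hgt
    · exact H ((u : ℕ) - (t : ℕ) - 1) W hW t u hlt (by omega)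
    · rw [Equiv.swap_comm]
      exact H ((t : ℕ) - (u : ℕ) - 1) W hW u t hgt (by omega)
  intro d
  induction d with
  | zero =>
    intro W hW t u hlt hd
    exact cdet_swap_adj W hW t u (by omega)
  | succ d ih =>
    intro W hW t u hlt hd
    have hun : (t : ℕ) + 1 < n := by have := u.isLt; omega
    set v : Fin n := ⟨(t : ℕ) + 1, hun⟩ with hv
    have htv : t ≠ v := by intro h; have := congrArg Fin.val h; simp [hv] at this
    have hvu : v ≠ u := by intro h; have := congrArg Fin.val h; simp [hv] at this; omega
    have htu : t ≠ u := by intro h; have := congrArg Fin.val h; omega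
    have hsw0 : Equiv.swap v t * Equiv.swap u v * Equiv.swap v t = Equiv.swap t u :=
      Equiv.swap_mul_swap_mul_swap hvu.symm htu.symm
    have hsw : ∀ p, Equiv.swap t u p = Equiv.swap t v (Equiv.swap v u (Equiv.swap t v p)) := by
      intro p
      rw [← hsw0]
      simp only [Equiv.Perm.mul_apply]
      rw [Equiv.swap_comm v t, Equiv.swap_comm u v]
    have hmat : W.submatrix id (Equiv.swap t u) =
        (((W.submatrix id (Equiv.swap t v)).submatrix id (Equiv.swap v u)).submatrix id
          (Equiv.swap t v)) := by
      ext a p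
      simp only [Matrix.submatrix_apply, id_eq]
      rw [hsw p]
    rw [hmat]
    rw [cdet_swap_adj _ ((hW.submatrix _).submatrix _) t v (by simp [hv])]
    rw [ih (W.submatrix id (Equiv.swap t v)) (hW.submatrix _) v u (by simp [hv]; omega)
      (by simp [hv]; omega)]
    rw [cdet_swap_adj W hW t v (by simp [hv])]
    simp

lemma cdet_dup [Algebra ℚ S] (W : Matrix (Fin n) (Fin n) S) (hW : MCols W) (t u : Fin n)
    (hne : t ≠ u) (hcol : ∀ a, W a t = W a u) : cdet W = 0 := by
  have h1 : W.submatrix id (Equiv.swap t u) = W := by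
    ext a p
    simp only [Matrix.submatrix_apply, id_eq]
    rcases eq_or_ne p t with rfl | hp1
    · rw [Equiv.swap_apply_left]; exact (hcol a).symm
    · rcases eq_or_ne p u with rfl | hp2
      · rw [Equiv.swap_apply_right]; exact hcol a
      · rw [Equiv.swap_apply_of_ne_of_ne hp1 hp2]
  have h2 := cdet_swap W hW t u hne
  rw [h1] at h2
  exact eq_zero_of_self_eq_neg h2

end MCols

section Ecol

variable {S : Type*} [Ring S] {m : ℕ}

/-- "Cofactor-like" coefficient for the expansion of `cdet` along the last column. -/
noncomputable def Ecol (W : Matrix (Fin (m + 1)) (Fin (m + 1)) S) (j : Fin (m + 1)) : S :=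
  ∑ σ ∈ Finset.univ.filter (fun σ : Equiv.Perm (Fin (m + 1)) => σ (Fin.last m) = j),
    (Equiv.Perm.sign σ : ℤ) • ((List.finRange m).map fun p => W (σ p.castSucc) p.castSucc).prod

lemma Ecol_congr (W W' : Matrix (Fin (m + 1)) (Fin (m + 1)) S)
    (h : ∀ a p, p ≠ Fin.last m → W a p = W' a p) (j : Fin (m + 1)) : Ecol W j = Ecol W' j := by
  unfold Ecol
  apply Finset.sum_congr rfl
  intro σ _
  congr 1
  apply congrArg
  apply List.map_congr_left
  intro p _
  exact h _ _ (Fin.castSucc_lt_last p).ne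

lemma cdet_eq_sum_Ecol (W : Matrix (Fin (m + 1)) (Fin (m + 1)) S) :
    cdet W = ∑ j, Ecol W j * W j (Fin.last m) := by
  unfold cdet Ecol
  rw [← Finset.sum_fiberwise Finset.univ (fun σ : Equiv.Perm (Fin (m + 1)) => σ (Fin.last m))]
  apply Finset.sum_congr rfl
  intro j _
  rw [Finset.sum_mul]
  apply Finset.sum_congr rfl
  intro σ hσ
  rw [Finset.mem_filter] at hσ
  rw [prod_split_last (fun p => W (σ p) p), hσ.2, smul_mul_assoc]

end Ecol

section Deriv

variable {R : Type*} [Ring R]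

lemma derivative_list_prod : ∀ (n : ℕ) (f : Fin n → Polynomial R),
    Polynomial.derivative ((List.finRange n).map f).prod =
      ∑ i : Fin n,
        ((List.finRange n).map (Function.update f i (Polynomial.derivative (f i)))).prod := by
  intro n
  induction n with
  | zero => intro f; simp
  | succ n ih =>
    intro f
    rw [List.finRange_succ]
    simp only [List.map_cons, List.prod_cons, List.map_map, Function.comp_def]
    rw [Polynomial.derivative_mul]
    rw [ih (fun p => f p.succ)]
    rw [Fin.sum_univ_succ]
    have e0 : ∀ x : Polynomial R, Function.update f 0 x 0 = x := by intro x; simp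
    have e1 : ∀ x : Polynomial R,
        (fun p : Fin n => Function.update f 0 x p.succ) = fun p => f p.succ := by
      intro x; funext p; rw [Function.update_of_ne (Fin.succ_ne_zero p)]
    have e2 : ∀ (i : Fin n) (x : Polynomial R), Function.update f i.succ x 0 = f 0 := by
      intro i x; rw [Function.update_of_ne (Fin.succ_ne_zero i).symm]
    have e3 : ∀ (i : Fin n) (x : Polynomial R),
        (fun p : Fin n => Function.update f i.succ x p.succ)
          = Function.update (fun p => f p.succ) i x := by
      intro i x
      have h := Function.update_comp_eq_of_injective f (Fin.succ_injective n) i x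
      funext p
      calc Function.update f i.succ x p.succ = (Function.update f i.succ x ∘ Fin.succ) p := rfl
        _ = Function.update (f ∘ Fin.succ) i x p := by rw [h]
        _ = Function.update (fun p => f p.succ) i x p := rfl
    rw [e0, e1, Finset.mul_sum]
    congr 1
    apply Finset.sum_congr rfl
    intro i _
    rw [e2, e3]

lemma derivative_cdet {n : ℕ} (M B : Matrix (Fin n) (Fin n) (Polynomial R))
    (hMB : ∀ a b, Polynomial.derivative (M a b) = B a b) :
    Polynomial.derivative (cdet M) =
      ∑ i : Fin n, cdet (Matrix.of fun a p => if p = i then B a i else M a p) := by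
  unfold cdet
  rw [map_sum]
  have step : ∀ σ : Equiv.Perm (Fin n),
      Polynomial.derivative ((Equiv.Perm.sign σ : ℤ) •
          ((List.finRange n).map fun p => M (σ p) p).prod) =
        ∑ i : Fin n, (Equiv.Perm.sign σ : ℤ) •
          ((List.finRange n).map fun p =>
            (Matrix.of fun a p => if p = i then B a i else M a p) (σ p) p).prod := by
    intro σ
    rw [map_zsmul, derivative_list_prod, Finset.smul_sum]
    apply Finset.sum_congr rfl
    intro i _
    congr 1
    apply congrArg
    apply List.map_congr_left
    intro p _
    rcases eq_or_ne p i with rfl | hpi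
    · rw [Function.update_self]
      simp [hMB]
    · rw [Function.update_of_ne hpi]
      simp [hpi]
  rw [Finset.sum_congr rfl (fun σ _ => step σ)]
  rw [Finset.sum_comm]

end Deriv

section Comm

variable {T : Type*} [Ring T]

lemma central_add_comm (d1 d2 x1 x2 : T) (h1 : ∀ z, d1 * z = z * d1)
    (h2 : ∀ z, d2 * z = z * d2) :
    (d1 + x1) * (d2 + x2) - (d2 + x2) * (d1 + x1) = x1 * x2 - x2 * x1 := by
  simp only [add_mul, mul_add]
  rw [h1 d2, h1 x2, h2 x1]
  abel

lemma central_add_comm' (d2 x1 x2 : T) (h2 : ∀ z, d2 * z = z * d2) :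
    x1 * (d2 + x2) - (d2 + x2) * x1 = x1 * x2 - x2 * x1 := by
  have := central_add_comm 0 d2 x1 x2 (by simp) h2
  simpa using this

lemma central_add_comm'' (d1 x1 x2 : T) (h1 : ∀ z, d1 * z = z * d1) :
    (d1 + x1) * x2 - x2 * (d1 + x1) = x1 * x2 - x2 * x1 := by
  have := central_add_comm d1 0 x1 x2 h1 (by simp)
  simpa using this

lemma mul_smul_central {n' : ℕ} (c : T) (hc : ∀ z : T, c * z = z * c)
    (M N : Matrix (Fin n') (Fin n') T) : M * (c • N) = c • (M * N) := by
  ext a b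
  simp only [Matrix.mul_apply, Matrix.smul_apply, smul_eq_mul, Finset.mul_sum]
  apply Finset.sum_congr rfl
  intro j _
  rw [← mul_assoc, ← hc (M a j), mul_assoc]

end Comm

section PolyComm

variable {R : Type*} [Ring R]

open Polynomial

lemma C_mul_X_mul_C (x y : R) : C x * (X * C y) = X * C (x * y) := by
  rw [← mul_assoc, ← Polynomial.X_mul, mul_assoc, ← Polynomial.C_mul]

lemma X_mul_C_mul_C (x y : R) : (X * C x) * C y = X * C (x * y) := by
  rw [mul_assoc, ← Polynomial.C_mul]

lemma Xc_comm (x y : R) :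
    (X * C x) * (X * C y) - (X * C y) * (X * C x) = X ^ 2 * C (x * y - y * x) := by
  have key : ∀ a b : R, (X * C a) * (X * C b) = X ^ 2 * C (a * b) := by
    intro a b
    rw [mul_assoc, ← mul_assoc (C a), ← Polynomial.X_mul, pow_two, mul_assoc, mul_assoc,
      ← Polynomial.C_mul]
  rw [key, key, ← mul_sub, ← map_sub]

lemma Cx_comm (x y : R) :
    C x * (X * C y) - (X * C y) * C x = X * C (x * y - y * x) := by
  rw [C_mul_X_mul_C, X_mul_C_mul_C, ← mul_sub, ← map_sub]

lemma xC_comm (x y : R) :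
    (X * C x) * C y - C y * (X * C x) = X * C (x * y - y * x) := by
  rw [C_mul_X_mul_C, X_mul_C_mul_C, ← mul_sub, ← map_sub]

end PolyComm

end NewtonAux


set_option maxHeartbeats 2000000 in
open NewtonAux Polynomial in
/-- Newton's identities for Manin matrices: if `A` is an `n × n` Manin matrix over an
associative unital `ℚ`-algebra `R`, `T_k = tr(A^k)`, and `σ_0, …, σ_n` are defined by
`cdet(1 + αA) = ∑_{k=0}^{n} σ_k α^k` in `R[α]`, then for every `k = 1, …, n`,
`σ_k = ((−1)^{k+1}/k) ∑_{i=0}^{k−1} (−1)^i σ_i T_{k−i}`. -/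
theorem newton_identities_manin (R : Type*) [Ring R] [Algebra ℚ R] (n : ℕ)
    (A : Matrix (Fin n) (Fin n) R) (hA : IsManinMatrix A)
    (σ : ℕ → R)
    (hσ : cdet ((1 : Matrix (Fin n) (Fin n) (Polynomial R)) +
        (Polynomial.X : Polynomial R) • A.map Polynomial.C) =
      ∑ k ∈ Finset.range (n + 1), Polynomial.C (σ k) * Polynomial.X ^ k) :
    ∀ k, 1 ≤ k → k ≤ n →
      σ k = (((-1 : ℚ) ^ (k + 1)) / (k : ℚ)) •
        ∑ i ∈ Finset.range k, ((-1 : ℚ) ^ i) • (σ i * Matrix.trace (A ^ (k - i))) := by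
  intro k hk1 hkn
  obtain ⟨m, rfl⟩ : ∃ m, n = m + 1 := ⟨n - 1, by omega⟩
  classical
  set B : Matrix (Fin (m + 1)) (Fin (m + 1)) (Polynomial R) := A.map Polynomial.C with hB
  set M : Matrix (Fin (m + 1)) (Fin (m + 1)) (Polynomial R) := 1 + (Polynomial.X : Polynomial R) • B with hM
  set P : Polynomial R := cdet M with hP
  -- entries of M
  have hMapp : ∀ a b, M a b =
      (if a = b then (1 : Polynomial R) else 0) + Polynomial.X * Polynomial.C (A a b) := by
    intro a b
    simp [hM, hB, Matrix.add_apply, Matrix.one_apply, Matrix.map_apply, smul_eq_mul]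
  have hone_central : ∀ (a b : Fin (m + 1)) (z : Polynomial R),
      (if a = b then (1 : Polynomial R) else 0) * z = z * (if a = b then 1 else 0) := by
    intro a b z; split_ifs <;> simp
  have hsame : ∀ a b j, A a j * A b j = A b j * A a j := by
    intro a b j
    exact eq_of_sub_eq_sub (hA a j b j)
  have hMC : MCols M := by
    intro a b t u
    rw [hMapp a t, hMapp b u, hMapp b t, hMapp a u,
      central_add_comm _ _ _ _ (hone_central a t) (hone_central b u),
      central_add_comm _ _ _ _ (hone_central b t) (hone_central a u),
      Xc_comm, Xc_comm, hA a t b u]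
  -- the matrices with column i replaced by column i of B
  set Wmat : Fin (m + 1) → Matrix (Fin (m + 1)) (Fin (m + 1)) (Polynomial R) :=
    fun i => Matrix.of fun a p => if p = i then B a i else M a p with hWmat
  have hBapp : ∀ a i, B a i = Polynomial.C (A a i) := by
    intro a i; simp [hB, Matrix.map_apply]
  have hWC : ∀ i, MCols (Wmat i) := by
    intro i a b t u
    have e : ∀ (a p : Fin (m + 1)),
        (Wmat i) a p = if p = i then Polynomial.C (A a i) else M a p := by
      intro a p
      simp only [hWmat, Matrix.of_apply]
      split_ifs with h
      · rw [hBapp]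
      · rfl
    rw [e a t, e b u, e b t, e a u]
    by_cases ht : t = i <;> by_cases hu : u = i
    · subst ht; subst hu
      simp only [eq_self_iff_true, if_true]
      simp only [← map_mul]
      rw [hsame]
    · subst ht
      simp only [eq_self_iff_true, if_true, hu, if_false]
      rw [hMapp b u, hMapp a u,
        central_add_comm' _ _ _ (hone_central b u),
        central_add_comm' _ _ _ (hone_central a u),
        Cx_comm, Cx_comm, hA]
    · subst hu
      simp only [eq_self_iff_true, if_true, ht, if_false]
      rw [hMapp a t, hMapp b t,
        central_add_comm'' _ _ _ (hone_central a t),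
        central_add_comm'' _ _ _ (hone_central b t),
        xC_comm, xC_comm, hA]
    · simp only [ht, hu, if_false]
      exact hMC a b t u
  -- coefficients of P
  have hPco : ∀ j, j < m + 2 → P.coeff j = σ j := by
    intro j hj
    rw [hσ, Polynomial.finset_sum_coeff]
    rw [Finset.sum_congr rfl (fun t _ => by
      rw [Polynomial.coeff_C_mul, Polynomial.coeff_X_pow])]
    simp only [mul_ite, mul_one, mul_zero]
    rw [Finset.sum_ite_eq (Finset.range (m + 1 + 1)) j σ]
    rw [if_pos (Finset.mem_range.mpr hj)]
  -- derivative of entries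
  have hMB : ∀ a b, Polynomial.derivative (M a b) = B a b := by
    intro a b
    rw [hMapp, hBapp]
    rw [map_add]
    have h1 : Polynomial.derivative (if a = b then (1 : Polynomial R) else 0) = 0 := by
      split_ifs <;> simp
    rw [h1, Polynomial.derivative_mul]
    simp
  have hderiv : Polynomial.derivative P = ∑ i, cdet (Wmat i) := by
    rw [hP, derivative_cdet M B hMB]
  -- sign bookkeeping for swapping a column with the last one
  set ε : Fin (m + 1) → ℤ := fun i => if i = Fin.last m then 1 else -1 with hε
  have hswapW : ∀ (W : Matrix (Fin (m + 1)) (Fin (m + 1)) (Polynomial R)), MCols W →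
      ∀ i, cdet (W.submatrix id (Equiv.swap i (Fin.last m))) = ε i • cdet W := by
    intro W hW i
    by_cases h : i = Fin.last m
    · subst h
      rw [Equiv.swap_self]
      simp [hε]
    · rw [cdet_swap W hW i _ h]
      simp [hε, h]
  have hepseps : ∀ (i : Fin (m + 1)) (z : Polynomial R), ε i • ε i • z = z := by
    intro i z
    rw [smul_smul]
    by_cases h : i = Fin.last m <;> simp [hε, h]
  have hswapW' : ∀ (W : Matrix (Fin (m + 1)) (Fin (m + 1)) (Polynomial R)), MCols W →
      ∀ i, cdet W = ε i • cdet (W.submatrix id (Equiv.swap i (Fin.last m))) := by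
    intro W hW i
    rw [hswapW W hW i, hepseps]
  -- the adjugate-like matrix
  set G : Matrix (Fin (m + 1)) (Fin (m + 1)) (Polynomial R) :=
    Matrix.of fun i j => ε i • Ecol (M.submatrix id (Equiv.swap i (Fin.last m))) j with hG
  have keyA : ∀ i l, (∑ j, G i j * M j l) = if i = l then P else 0 := by
    intro i l
    set s := Equiv.swap i (Fin.last m) with hs
    set Y := M.submatrix id (fun p => if p = Fin.last m then l else s p) with hY
    have h1 : ∀ j, Ecol (M.submatrix id s) j = Ecol Y j := by
      intro j
      apply Ecol_congr
      intro a p hp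
      simp only [hY, Matrix.submatrix_apply, id_eq, if_neg hp]
    have h2 : ∀ j, Y j (Fin.last m) = M j l := by
      intro j
      simp [hY]
    have hL : (∑ j, G i j * M j l) = ε i • cdet Y := by
      rw [cdet_eq_sum_Ecol Y, Finset.smul_sum]
      apply Finset.sum_congr rfl
      intro j _
      rw [← h2 j, ← h1 j]
      simp only [hG, Matrix.of_apply, smul_mul_assoc, hs]
    rw [hL]
    by_cases hil : i = l
    · subst hil
      have hYs : Y = M.submatrix id s := by
        ext a p
        simp only [hY, Matrix.submatrix_apply, id_eq]
        congr 1
        by_cases hp : p = Fin.last m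
        · subst hp
          rw [if_pos rfl, hs, Equiv.swap_apply_right]
        · rw [if_neg hp]
      rw [hYs, ← hswapW' M hMC i, if_pos rfl]
    · have hsl : s l ≠ Fin.last m := by
        by_cases hll : l = Fin.last m
        · subst hll
          rw [hs, Equiv.swap_apply_right]
          exact fun h => hil h
        · rw [hs, Equiv.swap_apply_of_ne_of_ne (fun h => hil h.symm) hll]
          exact hll
      have hdup : cdet Y = 0 := by
        apply cdet_dup Y (hMC.submatrix _) (s l) (Fin.last m) hsl
        intro a
        simp only [hY, Matrix.submatrix_apply, id_eq]
        rw [if_neg hsl]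
        simp [hs, Equiv.swap_apply_self]
      rw [hdup, smul_zero, if_neg hil]
  have keyB : Polynomial.derivative P = ∑ i, ∑ j, G i j * B j i := by
    rw [hderiv]
    apply Finset.sum_congr rfl
    intro i _
    set s := Equiv.swap i (Fin.last m) with hs
    set V := (Wmat i).submatrix id s with hV
    have h1 : cdet (Wmat i) = ε i • cdet V := hswapW' (Wmat i) (hWC i) i
    have h2 : ∀ j, Ecol V j = Ecol (M.submatrix id s) j := by
      intro j
      apply Ecol_congr
      intro a p hp
      have hpi : s p ≠ i := by
        intro h
        apply hp
        have := congrArg s h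
        rw [Equiv.swap_apply_self] at this
        rw [this, hs, Equiv.swap_apply_left]
      simp only [hV, hWmat, Matrix.submatrix_apply, id_eq, Matrix.of_apply, if_neg hpi]
    have h3 : ∀ j, V j (Fin.last m) = B j i := by
      intro j
      simp only [hV, hWmat, Matrix.submatrix_apply, id_eq, Matrix.of_apply, hs,
        Equiv.swap_apply_right]
      simp
    rw [h1, cdet_eq_sum_Ecol V, Finset.smul_sum]
    apply Finset.sum_congr rfl
    intro j _
    rw [h3 j, h2 j]
    simp only [hG, Matrix.of_apply, smul_mul_assoc, hs]
  -- matrix identities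
  have hGM : G * M = P • (1 : Matrix (Fin (m + 1)) (Fin (m + 1)) (Polynomial R)) := by
    ext i l
    rw [Matrix.mul_apply, keyA i l]
    simp only [Matrix.smul_apply, Matrix.one_apply, smul_eq_mul]
    split_ifs <;> simp
  set YY : Matrix (Fin (m + 1)) (Fin (m + 1)) (Polynomial R) :=
    (-(Polynomial.X : Polynomial R)) • B with hYY
  have hM1 : M = 1 - YY := by
    rw [hM, hYY, neg_smul, sub_neg_eq_add]
  have hXc : ∀ z : Polynomial R, (-(Polynomial.X : Polynomial R)) * z =
      z * (-(Polynomial.X : Polynomial R)) := by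
    intro z
    rw [neg_mul, mul_neg, Polynomial.X_mul]
  have hXqc : ∀ (q : ℕ) (z : Polynomial R),
      ((-(Polynomial.X : Polynomial R)) ^ q) * z = z * ((-(Polynomial.X : Polynomial R)) ^ q) := by
    intro q z
    exact (Commute.pow_left (hXc z) q)
  have hYYq : ∀ q : ℕ, YY ^ q = ((-(Polynomial.X : Polynomial R)) ^ q) • B ^ q := by
    intro q
    induction q with
    | zero => simp
    | succ q ih =>
      rw [pow_succ, ih, Matrix.smul_mul, hYY, mul_smul_central _ hXc, smul_smul,
        ← pow_succ, ← pow_succ]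
  set Sm : Matrix (Fin (m + 1)) (Fin (m + 1)) (Polynomial R) :=
    ∑ q ∈ Finset.range k, YY ^ q with hSm
  have hMS : M * Sm = 1 - YY ^ k := by
    rw [hM1]
    calc (1 - YY) * Sm = -((YY - 1) * Sm) := by rw [← neg_sub, neg_mul]
      _ = -(YY ^ k - 1) := by rw [hSm, mul_geom_sum]
      _ = 1 - YY ^ k := by rw [neg_sub]
  have hGrepr : G = P • Sm + G * YY ^ k := by
    have h1 : G * (M * Sm) = (G * M) * Sm := (mul_assoc G M Sm).symm
    rw [hMS, hGM, Matrix.smul_mul, one_mul, mul_sub, mul_one] at h1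
    exact sub_eq_iff_eq_add.mp h1
  have htr : Polynomial.derivative P = Matrix.trace (G * B) := by
    rw [keyB, Matrix.trace]
    apply Finset.sum_congr rfl
    intro i _
    simp [Matrix.diag, Matrix.mul_apply]
  have hGB : G * B = P • (Sm * B) +
      ((-(Polynomial.X : Polynomial R)) ^ k) • (G * (B ^ k * B)) := by
    calc G * B = (P • Sm + G * YY ^ k) * B := by rw [← hGrepr]
      _ = (P • Sm) * B + (G * YY ^ k) * B := add_mul _ _ _
      _ = P • (Sm * B) + ((-(Polynomial.X : Polynomial R)) ^ k) • (G * (B ^ k * B)) := by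
          rw [Matrix.smul_mul]
          congr 1
          rw [hYYq k, mul_smul_central _ (hXqc k), Matrix.smul_mul, mul_assoc]
  have htr2 : Polynomial.derivative P = P * Matrix.trace (Sm * B) +
      ((-(Polynomial.X : Polynomial R)) ^ k) * Matrix.trace (G * (B ^ k * B)) := by
    rw [htr, hGB, Matrix.trace_add, Matrix.trace_smul, Matrix.trace_smul, smul_eq_mul,
      smul_eq_mul]
  have hBpow : ∀ q : ℕ, B ^ q = (A ^ q).map Polynomial.C := by
    intro q
    rw [hB, ← RingHom.mapMatrix_apply, ← RingHom.mapMatrix_apply, ← map_pow]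
  have htrB : ∀ q : ℕ, Matrix.trace (B ^ q) = Polynomial.C (Matrix.trace (A ^ q)) := by
    intro q
    rw [hBpow q]
    simp [Matrix.trace, Matrix.diag, Matrix.map_apply]
  have htrS : Matrix.trace (Sm * B) = ∑ q ∈ Finset.range k,
      ((-(Polynomial.X : Polynomial R)) ^ q) * Polynomial.C (Matrix.trace (A ^ (q + 1))) := by
    rw [hSm, Finset.sum_mul, Matrix.trace_sum]
    apply Finset.sum_congr rfl
    intro q _
    rw [hYYq q, Matrix.smul_mul, ← pow_succ, Matrix.trace_smul, htrB, smul_eq_mul]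
  set J : Polynomial R := Matrix.trace (G * (B ^ k * B)) with hJ
  have main : Polynomial.derivative P =
      P * (∑ q ∈ Finset.range k,
        ((-(Polynomial.X : Polynomial R)) ^ q) * Polynomial.C (Matrix.trace (A ^ (q + 1))))
      + ((-(Polynomial.X : Polynomial R)) ^ k) * J := by
    rw [htr2, htrS, hJ]
  have hkk : k - 1 + 1 = k := Nat.succ_pred_eq_of_pos hk1
  have hnegpow : ∀ q : ℕ, ((-(Polynomial.X : Polynomial R)) ^ q) =
      Polynomial.C ((-1 : R) ^ q) * Polynomial.X ^ q := by
    intro q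
    rw [neg_pow]
    congr 1
    simp [map_pow]
  have hco := congrArg (fun p : Polynomial R => p.coeff (k - 1)) main
  rw [Polynomial.coeff_derivative, Polynomial.coeff_add] at hco
  have hrem : (((-(Polynomial.X : Polynomial R)) ^ k) * J).coeff (k - 1) = 0 := by
    rw [hnegpow, mul_assoc, Polynomial.coeff_C_mul, Polynomial.X_pow_mul,
      Polynomial.coeff_mul_X_pow', if_neg (by omega), mul_zero]
  have hTq : ∀ b, b < k → (∑ q ∈ Finset.range k,
      ((-(Polynomial.X : Polynomial R)) ^ q) * Polynomial.C (Matrix.trace (A ^ (q + 1)))).coeff b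
      = (-1 : R) ^ b * Matrix.trace (A ^ (b + 1)) := by
    intro b hb
    rw [Polynomial.finset_sum_coeff]
    have hterm : ∀ q, (((-(Polynomial.X : Polynomial R)) ^ q) *
        Polynomial.C (Matrix.trace (A ^ (q + 1)))).coeff b
        = if b = q then (-1 : R) ^ q * Matrix.trace (A ^ (q + 1)) else 0 := by
      intro q
      rw [hnegpow, mul_assoc, Polynomial.coeff_C_mul, Polynomial.X_pow_mul,
        Polynomial.coeff_mul_X_pow']
      rcases eq_or_ne b q with rfl | hbq
      · rw [if_pos (le_refl b), Nat.sub_self, Polynomial.coeff_C_zero, if_pos rfl]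
      · rw [if_neg hbq]
        by_cases hle : q ≤ b
        · rw [if_pos hle, Polynomial.coeff_C, if_neg (by omega), mul_zero]
        · rw [if_neg hle, mul_zero]
    rw [Finset.sum_congr rfl (fun q _ => hterm q)]
    rw [Finset.sum_ite_eq (Finset.range k) b _, if_pos (Finset.mem_range.mpr hb)]
  rw [hkk, hrem, add_zero, hPco k (by omega), Polynomial.coeff_mul] at hco
  rw [Finset.Nat.sum_antidiagonal_eq_sum_range_succ_mk] at hco
  simp only [Nat.succ_eq_add_one] at hco
  rw [hkk] at hco
  have hsummand : ∀ i ∈ Finset.range k, P.coeff i *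
      (∑ q ∈ Finset.range k,
        ((-(Polynomial.X : Polynomial R)) ^ q) * Polynomial.C (Matrix.trace (A ^ (q + 1)))).coeff (k - 1 - i)
      = ((-1 : ℚ) ^ (k - 1 - i)) • (σ i * Matrix.trace (A ^ (k - i))) := by
    intro i hi
    rw [Finset.mem_range] at hi
    rw [hPco i (by omega), hTq (k - 1 - i) (by omega)]
    have h1 : k - 1 - i + 1 = k - i := by omega
    rw [h1]
    have hcomm : σ i * ((-1 : R) ^ (k - 1 - i) * Matrix.trace (A ^ (k - i)))
        = ((-1 : R) ^ (k - 1 - i)) * (σ i * Matrix.trace (A ^ (k - i))) := by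
      rw [← mul_assoc, ← mul_assoc]
      congr 1
      exact (((Commute.neg_one_left (σ i)).pow_left _).eq).symm
    rw [hcomm, Algebra.smul_def]
    congr 1
    rw [map_pow, map_neg, map_one]
  rw [Finset.sum_congr rfl hsummand] at hco
  have hlhs : σ k * ((↑(k - 1) : R) + 1) = (k : ℚ) • σ k := by
    have h1 : ((k - 1 : ℕ) : R) + 1 = ((k : ℕ) : R) := by
      rw [← hkk]
      push_cast
      ring
    rw [h1, Algebra.smul_def, map_natCast]
    exact ((Nat.cast_commute k (σ k)).eq).symm
  rw [hlhs] at hco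
  have hgoal2 : ∑ i ∈ Finset.range k, ((-1 : ℚ) ^ i) • (σ i * Matrix.trace (A ^ (k - i)))
      = ((-1 : ℚ) ^ (k + 1)) • ((k : ℚ) • σ k) := by
    rw [hco, Finset.smul_sum]
    apply Finset.sum_congr rfl
    intro i hi
    rw [Finset.mem_range] at hi
    rw [smul_smul]
    congr 1
    have h2 : (k + 1) + (k - 1 - i) = i + 2 * (k - i) := by omega
    rw [← pow_add, h2, pow_add, pow_mul, neg_one_sq, one_pow, mul_one]
  rw [hgoal2, smul_smul, smul_smul]
  have hfin : (((-1 : ℚ) ^ (k + 1) / (k : ℚ)) * ((-1 : ℚ) ^ (k + 1))) * (k : ℚ) = 1 := by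
    have hk0 : (k : ℚ) ≠ 0 := Nat.cast_ne_zero.mpr (by omega)
    have hsq : (-1 : ℚ) ^ (k + 1) * (-1 : ℚ) ^ (k + 1) = 1 := by
      rw [← pow_add, show (k + 1) + (k + 1) = 2 * (k + 1) by omega, pow_mul, neg_one_sq, one_pow]
    field_simp
    rw [sq]
    exact hsq
  rw [hfin, one_smul]
end

section
/- Let F be a finitely generated commutative unital algebra over the polynomial ring ℂ[w], and let Tors F = {a ∈ F : p·a = 0 for some nonzero p ∈ ℂ[w]} be its ℂ[w]-torsion ideal. Then there exists a finite subset I ⊂ ℂ such that for every t ∈ ℂ \ I one has Tors F ⊆ (w−t)F; consequently, for every such t the natural surjective ring homomorphism F/(w−t)F → (F/Tors F)/((w−t)·(F/Tors F)) is an isomorphism. -/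
/-- The `ℂ[w]`-torsion ideal `Tors F = {a ∈ F : p·a = 0 for some nonzero p ∈ ℂ[w]}` of a
commutative `ℂ[w]`-algebra `F`. -/
noncomputable def torsIdeal (F : Type*) [CommRing F] [Algebra (Polynomial ℂ) F] : Ideal F where
  carrier := {a | ∃ p : Polynomial ℂ, p ≠ 0 ∧ p • a = 0}
  add_mem' := by
    rintro a b ⟨p, hp, hpa⟩ ⟨q, hq, hqb⟩
    refine ⟨p * q, mul_ne_zero hp hq, ?_⟩
    have h1 : (p * q) • a = 0 := by rw [mul_comm, mul_smul, hpa, smul_zero]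
    have h2 : (p * q) • b = 0 := by rw [mul_smul, hqb, smul_zero]
    rw [smul_add, h1, h2, add_zero]
  zero_mem' := ⟨1, one_ne_zero, smul_zero 1⟩
  smul_mem' := by
    rintro c a ⟨p, hp, hpa⟩
    exact ⟨p, hp, by rw [smul_comm, hpa, smul_zero]⟩

/-- Let `F` be a finitely generated commutative unital `ℂ[w]`-algebra and `Tors F` its
`ℂ[w]`-torsion ideal. Then there is a finite set `I ⊂ ℂ` such that for all `t ∉ I` one has
`Tors F ⊆ (w−t)F`; consequently, for such `t` the natural surjection
`F/(w−t)F → (F/Tors F)/((w−t)·(F/Tors F))` is an isomorphism. -/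
theorem torsion_le_span_and_quotient_iso (F : Type*) [CommRing F]
    [Algebra (Polynomial ℂ) F] [Algebra.FiniteType (Polynomial ℂ) F] :
    ∃ I : Finset ℂ, ∀ t : ℂ, t ∉ I →
      torsIdeal F ≤
        Ideal.span {algebraMap (Polynomial ℂ) F (Polynomial.X - Polynomial.C t)} ∧
      Function.Bijective
        (Ideal.quotientMap
          (I := Ideal.span {algebraMap (Polynomial ℂ) F (Polynomial.X - Polynomial.C t)})
          (Ideal.span {Ideal.Quotient.mk (torsIdeal F)
            (algebraMap (Polynomial ℂ) F (Polynomial.X - Polynomial.C t))})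
          (Ideal.Quotient.mk (torsIdeal F))
          (by
            rw [Ideal.span_le]
            rintro x rfl
            exact Ideal.mem_comap.mpr (Ideal.subset_span rfl))) := by
  classical
  have hNoeth : IsNoetherianRing F := Algebra.FiniteType.isNoetherianRing (Polynomial ℂ) F
  obtain ⟨s, hs⟩ : (torsIdeal F).FG := IsNoetherian.noetherian (torsIdeal F)
  have hmem : ∀ a ∈ s, ∃ p : Polynomial ℂ, p ≠ 0 ∧ p • a = 0 := fun a ha => by
    have h : a ∈ torsIdeal F := hs ▸ Ideal.subset_span ha
    exact h
  choose! p hp0 hpa using hmem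
  set P : Polynomial ℂ := ∏ a ∈ s, p a with hPdef
  have hP0 : P ≠ 0 := Finset.prod_ne_zero_iff.mpr hp0
  -- P annihilates the torsion ideal
  have key : ∀ x ∈ torsIdeal F, P • x = 0 := by
    set J : Ideal F :=
      { carrier := {x | P • x = 0}
        add_mem' := by
          intro a b ha hb
          simp only [Set.mem_setOf_eq] at *
          rw [smul_add, ha, hb, add_zero]
        zero_mem' := smul_zero P
        smul_mem' := by
          intro c x hx
          simp only [Set.mem_setOf_eq, smul_eq_mul] at *
          rw [← mul_smul_comm, hx, mul_zero] } with hJ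
    have hgen : ∀ a ∈ s, a ∈ J := by
      intro a ha
      obtain ⟨q, hq⟩ := Finset.dvd_prod_of_mem p ha
      show P • a = 0
      rw [hPdef, hq, mul_comm, mul_smul, hpa a ha, smul_zero]
    have hle : torsIdeal F ≤ J := by
      rw [← hs, Ideal.span_le]
      exact hgen
    exact fun x hx => hle hx
  refine ⟨P.roots.toFinset, fun t ht => ?_⟩
  have heval : P.eval t ≠ 0 := by
    intro h
    exact ht (Multiset.mem_toFinset.mpr ((Polynomial.mem_roots hP0).mpr h))
  set f := algebraMap (Polynomial ℂ) F with hf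
  set g : F := f (Polynomial.X - Polynomial.C t) with hg
  have hle : torsIdeal F ≤ Ideal.span {g} := by
    intro x hx
    have h1 : f P * x = 0 := by rw [← Algebra.smul_def]; exact key x hx
    obtain ⟨q, hq⟩ := Polynomial.X_sub_C_dvd_sub_C_eval (a := t) (p := P)
    have hmap : f P - f (Polynomial.C (P.eval t)) = g * f q := by
      rw [hg, ← map_mul, ← map_sub, hq]
    have hunit : f (Polynomial.C ((P.eval t)⁻¹)) * f (Polynomial.C (P.eval t)) = 1 := by
      rw [← map_mul, ← Polynomial.C_mul, inv_mul_cancel₀ heval, Polynomial.C_1, map_one]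
    refine Ideal.mem_span_singleton.mpr ⟨-(f (Polynomial.C ((P.eval t)⁻¹)) * f q * x), ?_⟩
    linear_combination (f (Polynomial.C ((P.eval t)⁻¹))) * h1 -
      (f (Polynomial.C ((P.eval t)⁻¹)) * x) * hmap - x * hunit
  refine ⟨hle, ?_, Ideal.quotientMap_surjective Ideal.Quotient.mk_surjective⟩
  refine Ideal.quotientMap_injective' ?_
  intro x hx
  simp only [Ideal.mem_comap] at hx
  obtain ⟨c, hc⟩ := Ideal.mem_span_singleton.mp hx
  obtain ⟨y, rfl⟩ := Ideal.Quotient.mk_surjective c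
  rw [← map_mul, Ideal.Quotient.mk_eq_mk_iff_sub_mem] at hc
  have h2 : x - g * y ∈ Ideal.span {g} := hle hc
  have h3 : g * y ∈ Ideal.span {g} :=
    Ideal.mul_mem_right y _ (Ideal.subset_span rfl)
  simpa using Ideal.add_mem _ h2 h3
end

section
/- Let A be a commutative unital ring, k ≥ 1 an integer, and m_1 < m_2 < ⋯ < m_k integers. For each i = 1, …, k let f_i ∈ A((x)) be a formal Laurent series whose coefficient of x^{m_i} equals 1 and whose coefficient of x^q vanishes for all q < m_i. Let W(f_1, …, f_k) = det(f_i^{(j−1)})_{i,j=1}^{k} be the Wronskian, where f^{(j)} is the j-th termwise formal derivative. Set Q = m_1 + ⋯ + m_k − k(k−1)/2. Then the coefficient of x^q in W(f_1, …, f_k) vanishes for every q < Q, and the coefficient of x^Q equals (∏_{1 ≤ i < j ≤ k} (m_j − m_i)) · 1_A. In particular, W(f_1, …, f_k) ≠ 0 whenever A is a nonzero ℚ-algebra. -/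
/-- The termwise formal derivative of a formal Laurent series. -/
noncomputable def lderiv {A : Type*} [CommRing A] (f : LaurentSeries A) : LaurentSeries A where
  coeff q := (q + 1) • f.coeff (q + 1)
  isPWO_support' := by
    have h : Function.support (fun q : ℤ => (q + 1) • f.coeff (q + 1)) ⊆
        (fun q : ℤ => q - 1) '' f.support := by
      intro q hq
      refine ⟨q + 1, ?_, by ring⟩
      intro hc
      simp [Function.mem_support, hc] at hq
    exact (Set.IsPWO.image_of_monotone f.isPWO_support (fun a b hab => by omega)).mono h

/-- The Wronskian `W(f_1, …, f_k) = det(f_i^{(j−1)})` of Laurent series. -/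
noncomputable def wronskian {A : Type*} [CommRing A] {k : ℕ}
    (f : Fin k → LaurentSeries A) : LaurentSeries A :=
  Matrix.det (Matrix.of fun i j : Fin k => lderiv^[(j : ℕ)] (f i))

open Finset Polynomial

section Aux
variable {A : Type*} [CommRing A]

lemma lderiv_coeff (f : LaurentSeries A) (q : ℤ) : (lderiv f).coeff q = (q+1) • f.coeff (q+1) := rfl

lemma iter_low (f : LaurentSeries A) (n : ℤ) (h : ∀ q < n, f.coeff q = 0) (j : ℕ) :
    (∀ q < n - j, (lderiv^[j] f).coeff q = 0) ∧
    (lderiv^[j] f).coeff (n - j) = (∏ t ∈ Finset.range j, (n - t)) • f.coeff n := by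
  induction j with
  | zero => simpa using h
  | succ j ih =>
    rw [Function.iterate_succ_apply']
    constructor
    · intro q hq
      rw [lderiv_coeff, ih.1 (q+1) (by push_cast at hq ⊢; omega), smul_zero]
    · rw [lderiv_coeff]
      rw [show ((n - ((j:ℕ)+1:ℕ) : ℤ) + 1) = n - j by push_cast; ring, ih.2,
        Finset.prod_range_succ, smul_smul]
      congr 1
      push_cast; ring

lemma mul_low (x y : LaurentSeries A) (a b : ℤ)
    (hx : ∀ q < a, x.coeff q = 0) (hy : ∀ q < b, y.coeff q = 0) :
    (∀ q < a + b, (x*y).coeff q = 0) ∧ (x*y).coeff (a+b) = x.coeff a * y.coeff b := by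
  have hxs : ∀ i ∈ x.support, a ≤ i := by
    intro i hi; by_contra hc; exact hi (hx i (by omega))
  have hys : ∀ i ∈ y.support, b ≤ i := by
    intro i hi; by_contra hc; exact hi (hy i (by omega))
  constructor
  · intro q hq
    rw [HahnSeries.coeff_mul]
    apply Finset.sum_eq_zero
    intro ij hij
    rw [Finset.mem_addAntidiagonal] at hij
    have := hxs _ hij.1
    have := hys _ hij.2.1
    omega
  · rw [HahnSeries.coeff_mul]
    have hsub : Finset.antidiagonal x.isPWO_support y.isPWO_support (a+b) ⊆ {(a,b)} := by
      intro ij hij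
      rw [Finset.mem_addAntidiagonal] at hij
      have := hxs _ hij.1
      have := hys _ hij.2.1
      have : ij = (a, b) := by
        have : ij.1 = a ∧ ij.2 = b := by omega
        exact Prod.ext this.1 this.2
      simp [this]
    rw [Finset.sum_subset hsub, Finset.sum_singleton]
    intro ij hij hnot
    rw [Finset.mem_singleton] at hij
    subst hij
    rw [Finset.mem_addAntidiagonal] at hnot
    push_neg at hnot
    by_cases hax : (a:ℤ) ∈ x.support
    · by_cases hby : (b:ℤ) ∈ y.support
      · exact absurd rfl (hnot hax hby)
      · simp [Function.mem_support, not_not] at hby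
        simp [hby]
    · simp [Function.mem_support, not_not] at hax
      simp [hax]

lemma prod_low {ι : Type*} (s : Finset ι) (g : ι → LaurentSeries A) (n : ι → ℤ)
    (h : ∀ i ∈ s, ∀ q < n i, (g i).coeff q = 0) :
    (∀ q < ∑ i ∈ s, n i, (∏ i ∈ s, g i).coeff q = 0) ∧
    (∏ i ∈ s, g i).coeff (∑ i ∈ s, n i) = ∏ i ∈ s, (g i).coeff (n i) := by
  classical
  induction s using Finset.cons_induction with
  | empty =>
    constructor
    · intro q hq
      simp only [Finset.prod_empty, Finset.sum_empty] at *
      rw [HahnSeries.coeff_one, if_neg (by omega)]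
    · simp [HahnSeries.coeff_one]
  | cons a s ha ih =>
    have ih' := ih (fun i hi => h i (Finset.mem_cons_of_mem hi))
    rw [Finset.prod_cons, Finset.sum_cons, Finset.prod_cons]
    have := mul_low (g a) (∏ i ∈ s, g i) (n a) (∑ i ∈ s, n i)
      (h a (Finset.mem_cons_self a s)) ih'.1
    exact ⟨this.1, by rw [this.2, ih'.2]⟩

lemma det_falling (k : ℕ) (m : Fin k → ℤ) :
    Matrix.det (Matrix.of fun i j : Fin k => ∏ t ∈ range (j:ℕ), (m i - t)) =
      ∏ i : Fin k, ∏ j ∈ Ioi i, (m j - m i) := by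
  have hmon : ∀ j : Fin k, Monic (∏ t ∈ range (j:ℕ), (X - C (t:ℤ))) :=
    fun j => monic_prod_of_monic _ _ (fun t _ => monic_X_sub_C _)
  have hdeg : ∀ j : Fin k, (∏ t ∈ range (j:ℕ), (X - C (t:ℤ))).natDegree = (j:ℕ) := by
    intro j
    rw [Polynomial.natDegree_prod_of_monic _ _ (fun t _ => monic_X_sub_C _)]
    simp only [natDegree_X_sub_C]
    simp
  have key := Matrix.det_eval_matrixOfPolynomials_eq_det_vandermonde m
    (fun j => ∏ t ∈ range (j:ℕ), (X - C (t:ℤ))) hdeg hmon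
  rw [Matrix.det_vandermonde] at key
  have hmat : (Matrix.of fun i j : Fin k =>
      eval (m i) ((fun j : Fin k => ∏ t ∈ range (j:ℕ), (X - C (t:ℤ))) j)) =
      (Matrix.of fun i j : Fin k => ∏ t ∈ range (j:ℕ), (m i - t)) := by
    ext i j
    simp [eval_prod]
  rw [hmat] at key
  exact key.symm

lemma filter_prod {M : Type*} [CommMonoid M] (k : ℕ) (g : Fin k → Fin k → M) :
    ∏ p ∈ Finset.univ.filter (fun p : Fin k × Fin k => p.1 < p.2), g p.1 p.2 =
    ∏ i : Fin k, ∏ j ∈ Ioi i, g i j := by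
  rw [Finset.prod_filter, Fintype.prod_prod_type]
  refine Finset.prod_congr rfl fun i _ => ?_
  rw [← Finset.prod_filter]
  congr 1
  ext j
  simp

end Aux

/-- Let `m_1 < ⋯ < m_k` be integers and `f_i ∈ A((x))` have coefficient `1` at `x^{m_i}` and
vanishing coefficients below `x^{m_i}`. With `Q = m_1 + ⋯ + m_k − k(k−1)/2`, the Wronskian
`W(f_1,…,f_k)` has vanishing coefficients below `x^Q`, its coefficient at `x^Q` equals
`∏_{i<j} (m_j − m_i) · 1_A`, and it is nonzero whenever `A` is a nonzero `ℚ`-algebra. -/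
theorem wronskian_lowest_coeff (A : Type*) [CommRing A] (k : ℕ) (hk : 1 ≤ k)
    (m : Fin k → ℤ) (hm : StrictMono m) (f : Fin k → LaurentSeries A)
    (hlead : ∀ i, (f i).coeff (m i) = 1)
    (hlow : ∀ i, ∀ q < m i, (f i).coeff q = 0) :
    (∀ q < (∑ i, m i) - (k * (k - 1) / 2 : ℕ), (wronskian f).coeff q = 0) ∧
    (wronskian f).coeff ((∑ i, m i) - (k * (k - 1) / 2 : ℕ)) =
      ((∏ p ∈ Finset.univ.filter (fun p : Fin k × Fin k => p.1 < p.2),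
        (m p.2 - m p.1) : ℤ) : A) ∧
    (∀ (_ : Algebra ℚ A), Nontrivial A → wronskian f ≠ 0) := by
  classical
  set Q : ℤ := (∑ i, m i) - (k * (k - 1) / 2 : ℕ) with hQ
  have hT : (∑ i : Fin k, ((i:ℕ) : ℤ)) = ((k * (k-1) / 2 : ℕ) : ℤ) := by
    rw [show (∑ i : Fin k, ((i:ℕ) : ℤ)) = ((∑ i : Fin k, (i:ℕ) : ℕ) : ℤ) by push_cast; rfl]
    congr 1
    rw [Fin.sum_univ_eq_sum_range (fun i => i) k]
    exact Finset.sum_range_id k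
  -- coefficient of det as sum over permutations
  have hcoeff : ∀ q : ℤ, (wronskian f).coeff q =
      ∑ σ : Equiv.Perm (Fin k), (((Equiv.Perm.sign σ : ℤ)) : A) *
        (∏ i : Fin k, lderiv^[(i:ℕ)] (f (σ i))).coeff q := by
    intro q
    rw [show (_root_.wronskian f) = Matrix.det (Matrix.of fun i j : Fin k =>
      lderiv^[(j : ℕ)] (f i)) from rfl, Matrix.det_apply']
    rw [show (∑ σ : Equiv.Perm (Fin k), ((Equiv.Perm.sign σ : ℤ) : LaurentSeries A) *
        ∏ i : Fin k, Matrix.of (fun i j : Fin k => lderiv^[(j : ℕ)] (f i)) (σ i) i).coeff q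
        = HahnSeries.coeff.addMonoidHom q (∑ σ : Equiv.Perm (Fin k),
          ((Equiv.Perm.sign σ : ℤ) : LaurentSeries A) *
          ∏ i : Fin k, Matrix.of (fun i j : Fin k => lderiv^[(j : ℕ)] (f i)) (σ i) i) from rfl,
      map_sum]
    refine Finset.sum_congr rfl fun σ _ => ?_
    show (((Equiv.Perm.sign σ : ℤ) : LaurentSeries A) *
        ∏ i : Fin k, Matrix.of (fun i j : Fin k => lderiv^[(j : ℕ)] (f i)) (σ i) i).coeff q = _
    rw [show ((Equiv.Perm.sign σ : ℤ) : LaurentSeries A)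
        = HahnSeries.C (((Equiv.Perm.sign σ : ℤ)) : A) from (map_intCast HahnSeries.C _).symm,
      HahnSeries.C_apply, HahnSeries.coeff_single_zero_mul]
    rfl
  -- per-permutation data
  have hsum : ∀ σ : Equiv.Perm (Fin k), (∑ i : Fin k, (m (σ i) - (i:ℕ))) = Q := by
    intro σ
    rw [Finset.sum_sub_distrib, Equiv.sum_comp σ m, hT]
  have hbound : ∀ σ : Equiv.Perm (Fin k), ∀ i : Fin k, ∀ q < m (σ i) - (i:ℕ),
      (lderiv^[(i:ℕ)] (f (σ i))).coeff q = 0 :=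
    fun σ i => (iter_low (f (σ i)) (m (σ i)) (hlow (σ i)) (i:ℕ)).1
  have hP0 : ∀ σ : Equiv.Perm (Fin k), ∀ q < Q,
      (∏ i : Fin k, lderiv^[(i:ℕ)] (f (σ i))).coeff q = 0 := by
    intro σ q hq
    have := (prod_low Finset.univ (fun i : Fin k => lderiv^[(i:ℕ)] (f (σ i)))
      (fun i : Fin k => m (σ i) - ((i:ℕ):ℤ)) (fun i _ => hbound σ i)).1
    exact this q (by rwa [hsum σ])
  have hPQ : ∀ σ : Equiv.Perm (Fin k),
      (∏ i : Fin k, lderiv^[(i:ℕ)] (f (σ i))).coeff Q =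
      ∏ i : Fin k, (((∏ t ∈ range (i:ℕ), (m (σ i) - t)) : ℤ) : A) := by
    intro σ
    have := (prod_low Finset.univ (fun i : Fin k => lderiv^[(i:ℕ)] (f (σ i)))
      (fun i : Fin k => m (σ i) - ((i:ℕ):ℤ)) (fun i _ => hbound σ i)).2
    rw [hsum σ] at this
    rw [this]
    refine Finset.prod_congr rfl fun i _ => ?_
    rw [(iter_low (f (σ i)) (m (σ i)) (hlow (σ i)) (i:ℕ)).2, hlead, zsmul_eq_mul, mul_one]
  -- the value at Q
  have hval : (wronskian f).coeff Q =
      ((∏ p ∈ Finset.univ.filter (fun p : Fin k × Fin k => p.1 < p.2), (m p.2 - m p.1) : ℤ) : A) := by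
    rw [hcoeff Q]
    have step1 : ∀ σ : Equiv.Perm (Fin k), (((Equiv.Perm.sign σ : ℤ)) : A) *
        (∏ i : Fin k, lderiv^[(i:ℕ)] (f (σ i))).coeff Q =
        ((((Equiv.Perm.sign σ : ℤ)) *
          ∏ i : Fin k, (∏ t ∈ range (i:ℕ), (m (σ i) - t)) : ℤ) : A) := by
      intro σ
      rw [hPQ σ]
      push_cast
      ring
    rw [Finset.sum_congr rfl (fun σ _ => step1 σ), ← Int.cast_sum]
    congr 1
    have : (∑ σ : Equiv.Perm (Fin k), ((Equiv.Perm.sign σ : ℤ)) *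
        ∏ i : Fin k, (∏ t ∈ range (i:ℕ), (m (σ i) - t)) : ℤ) =
        Matrix.det (Matrix.of fun i j : Fin k => ∏ t ∈ range (j:ℕ), (m i - t)) := by
      rw [Matrix.det_apply']
      rfl
    rw [this, det_falling, filter_prod k (fun i j => m j - m i)]
  refine ⟨?_, hval, ?_⟩
  · intro q hq
    rw [hcoeff q]
    refine Finset.sum_eq_zero fun σ _ => ?_
    rw [hP0 σ q hq, mul_zero]
  · intro _ hnt
    haveI := hnt
    set D : ℤ := ∏ p ∈ Finset.univ.filter (fun p : Fin k × Fin k => p.1 < p.2), (m p.2 - m p.1)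
      with hD
    have hDpos : 0 < D := by
      refine Finset.prod_pos fun p hp => ?_
      rw [Finset.mem_filter] at hp
      exact sub_pos.mpr (hm hp.2)
    have hDne : (D : A) ≠ 0 := by
      intro h0
      have h1 : (D : ℚ) ≠ 0 := Int.cast_ne_zero.mpr hDpos.ne'
      apply h1
      apply (algebraMap ℚ A).injective
      rw [map_intCast, h0, map_zero]
    intro hw
    apply hDne
    rw [← hval, hw, HahnSeries.coeff_zero]
end
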